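/- (Strategic Perceptron mistake bound, full model.) Let d ∈ ℕ, E = EuclideanSpace ℝ (Fin d), α > 0, R ≥ 0, w* ∈ E. Let s : ℕ → ℝ with s t ∈ {1, −1}, z : ℕ → E with ‖z t‖ ≤ R and s t · ⟪z t, w*⟫ ≥ 1 for all t, and x : ℕ → E. Define w : ℕ → E, predicates pos and mistake, and surrogates x̃ by: w 0 = 0; pos t ↔ ⟪x t, w t⟫ ≥ α·‖w t‖; mistake t ↔ ((pos t ∧ s t = −1) ∨ (¬ pos t ∧ s t = 1)); x̃ t = x t − (α/‖w t‖) • (w t) if s t = −1 ∧ ⟪x t, w t⟫ = α·‖w t‖ ∧ w t ≠ 0, and x̃ t = x t otherwise; w (t+1) = w t + s t • (x̃ t) if mistake t, and w (t+1) = w t otherwise. Assume for every t that x t is a best response of the agent with true point z t and budget α to the classifier w t with threshold α, i.e. for all y ∈ E: ((1 if ⟪y, w t⟫ ≥ α·‖w t‖ else 0) − ‖y − z t‖/α) ≤ ((1 if ⟪x t, w t⟫ ≥ α·‖w t‖ else 0) − ‖x t − z t‖/α). Then for every T ∈ ℕ, the number of indices t < T with mistake t is at most (R + α)² · ‖w*‖².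 -/

import Mathlib

open RealInnerProductSpace

set_option maxHeartbeats 1000000 in
open scoped Classical in
theorem strategic_perceptron_full_mistake_bound
    (d : ℕ) (α : ℝ) (hα : 0 < α) (R : ℝ) (hR : 0 ≤ R)
    (wstar : EuclideanSpace ℝ (Fin d))
    (s : ℕ → ℝ) (hs : ∀ t, s t = 1 ∨ s t = -1)
    (z : ℕ → EuclideanSpace ℝ (Fin d))
    (hzR : ∀ t, ‖z t‖ ≤ R)
    (hzm : ∀ t, s t * ⟪z t, wstar⟫ ≥ 1)
    (x : ℕ → EuclideanSpace ℝ (Fin d))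
    (w : ℕ → EuclideanSpace ℝ (Fin d))
    (pos mistake : ℕ → Prop)
    (xtilde : ℕ → EuclideanSpace ℝ (Fin d))
    (hw0 : w 0 = 0)
    (hpos : ∀ t, pos t ↔ ⟪x t, w t⟫ ≥ α * ‖w t‖)
    (hmis : ∀ t, mistake t ↔ ((pos t ∧ s t = -1) ∨ (¬ pos t ∧ s t = 1)))
    (hxt : ∀ t, xtilde t =
      if s t = -1 ∧ ⟪x t, w t⟫ = α * ‖w t‖ ∧ w t ≠ 0 then
        x t - (α / ‖w t‖) • w t
      else x t)
    (hupd : ∀ t, w (t + 1) = if mistake t then w t + s t • xtilde t else w t)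
    (hbr : ∀ t, ∀ y : EuclideanSpace ℝ (Fin d),
      ((if ⟪y, w t⟫ ≥ α * ‖w t‖ then (1 : ℝ) else 0) - ‖y - z t‖ / α) ≤
        ((if ⟪x t, w t⟫ ≥ α * ‖w t‖ then (1 : ℝ) else 0) - ‖x t - z t‖ / α)) :
    ∀ T : ℕ, (((Finset.range T).filter (fun t => mistake t)).card : ℝ) ≤
      (R + α) ^ 2 * ‖wstar‖ ^ 2 := by
  have hzero : ∀ {a b : EuclideanSpace ℝ (Fin d)}, ‖a - b‖ ≤ 0 → a = b := by
    intro a b h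
    have h2 : ‖a - b‖ = 0 := le_antisymm h (norm_nonneg _)
    exact sub_eq_zero.mp (norm_eq_zero.mp h2)
  -- Claim A: the agent never moves more than α.
  have hA : ∀ t, ‖x t - z t‖ ≤ α := by
    intro t
    have h := hbr t (z t)
    rw [sub_self, norm_zero, zero_div, sub_zero] at h
    have hd : ‖x t - z t‖ / α ≤ 1 := by split_ifs at h <;> linarith
    exact (div_le_one hα).mp hd
  -- if x is not classified positive then the agent didn't move
  have hA' : ∀ t, ¬(⟪x t, w t⟫ ≥ α * ‖w t‖) → x t = z t := by
    intro t hx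
    have h := hbr t (z t)
    rw [sub_self, norm_zero, zero_div, sub_zero, if_neg hx] at h
    have hd : ‖x t - z t‖ / α ≤ 0 := by split_ifs at h <;> linarith
    rcases div_nonpos_iff.mp hd with ⟨_, h2⟩ | ⟨h1, _⟩
    · linarith
    · exact hzero h1
  -- if z is already classified positive then the agent didn't move
  have hAz : ∀ t, ⟪z t, w t⟫ ≥ α * ‖w t‖ → x t = z t := by
    intro t hz'
    have h := hbr t (z t)
    rw [sub_self, norm_zero, zero_div, sub_zero, if_pos hz'] at h
    have hd : ‖x t - z t‖ / α ≤ 0 := by split_ifs at h <;> linarith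
    rcases div_nonpos_iff.mp hd with ⟨_, h2⟩ | ⟨h1, _⟩
    · linarith
    · exact hzero h1
  -- the projection of z onto the decision boundary is a feasible response
  have hproj : ∀ t, w t ≠ 0 → ⟪z t, w t⟫ ≤ α * ‖w t‖ →
      (1:ℝ) - ((α * ‖w t‖ - ⟪z t, w t⟫) / ‖w t‖) / α ≤
        (if ⟪x t, w t⟫ ≥ α * ‖w t‖ then (1:ℝ) else 0) - ‖x t - z t‖ / α := by
    intro t hw hc
    have hnw : (0:ℝ) < ‖w t‖ := norm_pos_iff.mpr hw
    set y := z t + ((α * ‖w t‖ - ⟪z t, w t⟫) / ‖w t‖ ^ 2) • w t with hy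
    have hyw : ⟪y, w t⟫ = α * ‖w t‖ := by
      rw [hy, inner_add_left, real_inner_smul_left, real_inner_self_eq_norm_sq]
      rw [div_mul_cancel₀ _ (by positivity : (‖w t‖:ℝ)^2 ≠ 0)]
      ring
    have hyz : ‖y - z t‖ = (α * ‖w t‖ - ⟪z t, w t⟫) / ‖w t‖ := by
      rw [hy, add_sub_cancel_left, norm_smul, Real.norm_eq_abs,
        abs_of_nonneg (div_nonneg (by linarith) (by positivity))]
      field_simp
    have h := hbr t y
    rw [if_pos hyw.ge, hyz] at h
    exact h
  have hdivle : ∀ {a b : ℝ}, a / α ≤ b / α → a ≤ b := by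
    intro a b h
    exact (div_le_div_iff_of_pos_right hα).mp h
  -- key per-step lemma
  have key : ∀ t, (0:ℝ) ≤ ⟪w t, wstar⟫ → mistake t →
      1 ≤ s t * ⟪xtilde t, wstar⟫ ∧ s t * ⟪xtilde t, w t⟫ ≤ 0 ∧ ‖xtilde t‖ ≤ R + α := by
    intro t hwst hm
    rcases (hmis t).mp hm with ⟨hp, hsv⟩ | ⟨hp, hsv⟩
    · -- false positive : s t = -1
      have hxw : ⟪x t, w t⟫ ≥ α * ‖w t‖ := (hpos t).mp hp
      have hz1 : (1:ℝ) ≤ -⟪z t, wstar⟫ := by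
        have := hzm t; rw [hsv] at this; linarith
      by_cases hcond : s t = -1 ∧ ⟪x t, w t⟫ = α * ‖w t‖ ∧ w t ≠ 0
      · obtain ⟨-, hb, hw⟩ := hcond
        have hnw : (0:ℝ) < ‖w t‖ := norm_pos_iff.mpr hw
        have hxv : xtilde t = x t - (α / ‖w t‖) • w t := by
          rw [hxt t, if_pos ⟨hsv, hb, hw⟩]
        have hc_le : ⟪z t, w t⟫ ≤ α * ‖w t‖ := by
          by_contra hgt
          push_neg at hgt
          have hxz := hAz t hgt.le
          rw [hxz] at hb
          linarith
        have h := hproj t hw hc_le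
        rw [if_pos hxw] at h
        have hle : ‖x t - z t‖ ≤ (α * ‖w t‖ - ⟪z t, w t⟫) / ‖w t‖ :=
          hdivle (by linarith)
        have hinner : ⟪x t - z t, w t⟫ = α * ‖w t‖ - ⟪z t, w t⟫ := by
          rw [inner_sub_left, hb]
        have hCS : ⟪x t - z t, w t⟫ ≤ ‖x t - z t‖ * ‖w t‖ := real_inner_le_norm _ _
        have hge : (α * ‖w t‖ - ⟪z t, w t⟫) / ‖w t‖ ≤ ‖x t - z t‖ := by
          rw [div_le_iff₀ hnw]; rw [hinner] at hCS; linarith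
        have hnormeq : ‖x t - z t‖ = (α * ‖w t‖ - ⟪z t, w t⟫) / ‖w t‖ :=
          le_antisymm hle hge
        have heq : ⟪x t - z t, w t⟫ = ‖x t - z t‖ * ‖w t‖ := by
          rw [hinner, hnormeq]; field_simp
        have hvec : ‖w t‖ • (x t - z t) = ‖x t - z t‖ • w t :=
          inner_eq_norm_mul_iff_real.mp heq
        have hxform : x t - z t = (‖x t - z t‖ / ‖w t‖) • w t := by
          have h2 := congrArg (fun v : EuclideanSpace ℝ (Fin d) => (‖w t‖)⁻¹ • v) hvec
          simp only [smul_smul] at h2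
          rw [inv_mul_cancel₀ hnw.ne', one_smul] at h2
          rw [div_eq_inv_mul]
          exact h2
        have hxeq : x t = z t + (‖x t - z t‖ / ‖w t‖) • w t := by
          rw [← hxform]; abel
        have hxt_eq : xtilde t = z t + (-(⟪z t, w t⟫) / ‖w t‖ ^ 2) • w t := by
          have hsc : (α * ‖w t‖ - ⟪z t, w t⟫) / ‖w t‖ / ‖w t‖ - α / ‖w t‖ =
              -(⟪z t, w t⟫) / ‖w t‖ ^ 2 := by
            field_simp
            ring
          rw [hxv, hxeq, hnormeq, add_sub_assoc, ← sub_smul, hsc]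
        have hc0 : 0 ≤ ⟪z t, w t⟫ := by
          have h3 := hA t
          rw [hnormeq, div_le_iff₀ hnw] at h3
          nlinarith
        refine ⟨?_, ?_, ?_⟩
        · rw [hxt_eq, hsv, inner_add_left, real_inner_smul_left]
          have hP : 0 ≤ ⟪z t, w t⟫ / ‖w t‖ ^ 2 * ⟪w t, wstar⟫ :=
            mul_nonneg (div_nonneg hc0 (by positivity)) hwst
          ring_nf at hP ⊢
          linarith [hP, hz1]
        · rw [hxv, hsv, inner_sub_left, real_inner_smul_left,
            real_inner_self_eq_norm_sq, hb]
          have e : α / ‖w t‖ * ‖w t‖ ^ 2 = α * ‖w t‖ := by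
            field_simp
          rw [e]
          simp
        · rw [hxt_eq]
          refine le_trans (norm_add_le _ _) ?_
          rw [norm_smul, Real.norm_eq_abs, abs_div, abs_neg, abs_of_nonneg hc0,
            abs_of_nonneg (by positivity : (0:ℝ) ≤ ‖w t‖ ^ 2)]
          have h4 : ⟪z t, w t⟫ / ‖w t‖ ^ 2 * ‖w t‖ ≤ α := by
            rw [div_mul_eq_mul_div, div_le_iff₀ (by positivity)]
            nlinarith [hc_le, hnw]
          linarith [hzR t]
      · have hxv : xtilde t = x t := by rw [hxt t, if_neg hcond]
        have hxz : x t = z t := by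
          by_cases hw : w t = 0
          · exact hAz t (by simp [hw])
          · have hnw : (0:ℝ) < ‖w t‖ := norm_pos_iff.mpr hw
            have hb : ⟪x t, w t⟫ ≠ α * ‖w t‖ := fun he => hcond ⟨hsv, he, hw⟩
            have hgt : α * ‖w t‖ < ⟪x t, w t⟫ := lt_of_le_of_ne hxw (Ne.symm hb)
            by_cases hc_le : ⟪z t, w t⟫ ≤ α * ‖w t‖
            · exfalso
              have h := hproj t hw hc_le
              rw [if_pos hxw] at h
              have hle : ‖x t - z t‖ ≤ (α * ‖w t‖ - ⟪z t, w t⟫) / ‖w t‖ :=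
                hdivle (by linarith)
              have hle2 : ‖x t - z t‖ * ‖w t‖ ≤ α * ‖w t‖ - ⟪z t, w t⟫ :=
                (le_div_iff₀ hnw).mp hle
              have hCS : ⟪x t - z t, w t⟫ ≤ ‖x t - z t‖ * ‖w t‖ := real_inner_le_norm _ _
              rw [inner_sub_left] at hCS
              linarith
            · push_neg at hc_le
              exact hAz t hc_le.le
        refine ⟨?_, ?_, ?_⟩
        · rw [hxv, hxz, hsv]; linarith
        · rw [hxv, hsv]
          have h5 : (0:ℝ) ≤ ⟪x t, w t⟫ := le_trans (mul_nonneg hα.le (norm_nonneg _)) hxw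
          linarith
        · rw [hxv, hxz]; linarith [hzR t]
    · -- false negative : s t = 1
      have hxw : ¬(⟪x t, w t⟫ ≥ α * ‖w t‖) := fun h => hp ((hpos t).mpr h)
      have hxz : x t = z t := hA' t hxw
      have hw : w t ≠ 0 := by
        intro h0
        exact hxw (by simp [h0])
      have hnw : (0:ℝ) < ‖w t‖ := norm_pos_iff.mpr hw
      have hxv : xtilde t = x t := by
        rw [hxt t, if_neg]
        rintro ⟨h1, -, -⟩
        rw [hsv] at h1; norm_num at h1
      have hc_lt : ⟪z t, w t⟫ < α * ‖w t‖ := by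
        rw [← hxz]; exact not_le.mp hxw
      have h := hproj t hw hc_lt.le
      rw [if_neg hxw, hxz, sub_self, norm_zero, zero_div, sub_zero] at h
      have hc0 : ⟪z t, w t⟫ ≤ 0 := by
        have h2 : (1:ℝ) ≤ ((α * ‖w t‖ - ⟪z t, w t⟫) / ‖w t‖) / α := by linarith
        rw [div_div, le_div_iff₀ (by positivity)] at h2
        linarith
      have hz1 : (1:ℝ) ≤ ⟪z t, wstar⟫ := by
        have := hzm t; rw [hsv] at this; linarith
      refine ⟨?_, ?_, ?_⟩
      · rw [hxv, hxz, hsv]; linarith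
      · rw [hxv, hxz, hsv]; linarith
      · rw [hxv, hxz]; linarith [hzR t, hα]
  -- main induction on the two perceptron potentials
  have main : ∀ T, ((((Finset.range T).filter (fun t => mistake t)).card : ℝ) ≤ ⟪w T, wstar⟫) ∧
      ‖w T‖ ^ 2 ≤ (((Finset.range T).filter (fun t => mistake t)).card : ℝ) * (R + α) ^ 2 := by
    intro T
    induction T with
    | zero => simp [hw0]
    | succ T ih =>
      obtain ⟨ih1, ih2⟩ := ih
      have hMs : ((Finset.range (T+1)).filter (fun t => mistake t)).card =
          if mistake T then ((Finset.range T).filter (fun t => mistake t)).card + 1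
          else ((Finset.range T).filter (fun t => mistake t)).card := by
        rw [Finset.range_add_one, Finset.filter_insert]
        split_ifs with h
        · rw [Finset.card_insert_of_notMem (by simp)]
        · rfl
      by_cases hm : mistake T
      · have hwst : (0:ℝ) ≤ ⟪w T, wstar⟫ := le_trans (Nat.cast_nonneg _) ih1
        obtain ⟨k1, k2, k3⟩ := key T hwst hm
        have hwT : w (T + 1) = w T + s T • xtilde T := by rw [hupd T, if_pos hm]
        have hs2 : s T ^ 2 = 1 := by rcases hs T with h | h <;> rw [h] <;> norm_num
        constructor
        · rw [hMs, if_pos hm, hwT, inner_add_left, real_inner_smul_left]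
          push_cast
          linarith
        · rw [hMs, if_pos hm, hwT, norm_add_sq_real, real_inner_smul_right,
            norm_smul, Real.norm_eq_abs, mul_pow, sq_abs, hs2, one_mul,
            real_inner_comm]
          push_cast
          have hx2 : ‖xtilde T‖ ^ 2 ≤ (R + α) ^ 2 :=
            pow_le_pow_left₀ (norm_nonneg _) k3 2
          linarith [k2, hx2]
      · have hwT : w (T + 1) = w T := by rw [hupd T, if_neg hm]
        rw [hMs, if_neg hm, hwT]
        exact ⟨ih1, ih2⟩
  intro T
  obtain ⟨h1, h2⟩ := main T
  have hCS : ⟪w T, wstar⟫ ≤ ‖w T‖ * ‖wstar‖ := real_inner_le_norm _ _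
  set m : ℝ := (((Finset.range T).filter (fun t => mistake t)).card : ℝ) with hm
  have hm0 : (0:ℝ) ≤ m := Nat.cast_nonneg _
  rcases eq_or_lt_of_le hm0 with h0 | h0
  · rw [← h0]
    positivity
  · have hsq : m * m ≤ (‖w T‖ * ‖wstar‖) * (‖w T‖ * ‖wstar‖) :=
      mul_self_le_mul_self hm0 (le_trans h1 hCS)
    have h3 : ‖w T‖ ^ 2 * ‖wstar‖ ^ 2 ≤ (m * (R + α) ^ 2) * ‖wstar‖ ^ 2 :=
      mul_le_mul_of_nonneg_right h2 (sq_nonneg _)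
    nlinarith [hsq, h3, h0]
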